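/- The function θ(t) = (t²+1)·erfc(t/√2) - √(2/π)·e^{-t²/2}·t is strictly decreasing on [0, ∞), satisfies θ(0) = 1, and tends to 0 as t → ∞. -/

import Mathlib

open MeasureTheory Real

/-- The complementary error function `erfc z = (2/√π) ∫_z^∞ e^{-s²} ds`. -/
noncomputable def erfc (z : ℝ) : ℝ := (2 / Real.sqrt π) * ∫ s in Set.Ioi z, Real.exp (-s ^ 2)

/-- The closed form of θ(t) = E[(|h| - t)₊²]. -/
noncomputable def theta (t : ℝ) : ℝ :=
  (t ^ 2 + 1) * erfc (t / Real.sqrt 2) - Real.sqrt (2 / π) * Real.exp (-t ^ 2 / 2) * t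

section aux

open Set Filter

lemma gauss_integrable : Integrable (fun s : ℝ => Real.exp (-s ^ 2)) := by
  have := integrable_exp_neg_mul_sq (one_pos (α := ℝ))
  simpa using this

lemma gauss_mul_integrable : Integrable (fun s : ℝ => s * Real.exp (-s ^ 2)) := by
  have := integrable_mul_exp_neg_mul_sq (one_pos (α := ℝ))
  simpa using this

lemma G_eq (z : ℝ) :
    (∫ s in Ioi z, Real.exp (-s ^ 2)) =
      (∫ s in Ioi (0 : ℝ), Real.exp (-s ^ 2)) - ∫ s in (0:ℝ)..z, Real.exp (-s ^ 2) := by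
  rcases le_or_gt 0 z with hz | hz
  · rw [intervalIntegral.integral_of_le hz, eq_sub_iff_add_eq, add_comm,
      ← setIntegral_union (Set.Ioc_disjoint_Ioi le_rfl) measurableSet_Ioi
        gauss_integrable.integrableOn gauss_integrable.integrableOn,
      Set.Ioc_union_Ioi_eq_Ioi hz]
  · rw [intervalIntegral.integral_of_ge hz.le, sub_neg_eq_add, add_comm,
      ← setIntegral_union (Set.Ioc_disjoint_Ioi le_rfl) measurableSet_Ioi
        gauss_integrable.integrableOn gauss_integrable.integrableOn,
      Set.Ioc_union_Ioi_eq_Ioi hz.le]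

lemma hasDerivAt_erfc (z : ℝ) :
    HasDerivAt erfc (-(2 / Real.sqrt π) * Real.exp (-z ^ 2)) z := by
  have hgc : Continuous (fun s : ℝ => Real.exp (-s ^ 2)) := by fun_prop
  have hFTC : HasDerivAt (fun z : ℝ => ∫ s in (0:ℝ)..z, Real.exp (-s ^ 2))
      (Real.exp (-z ^ 2)) z :=
    intervalIntegral.integral_hasDerivAt_right
      (gauss_integrable.intervalIntegrable)
      hgc.aestronglyMeasurable.stronglyMeasurableAtFilter
      hgc.continuousAt
  have : HasDerivAt (fun z : ℝ => (2 / Real.sqrt π) *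
      ((∫ s in Ioi (0:ℝ), Real.exp (-s ^ 2)) - ∫ s in (0:ℝ)..z, Real.exp (-s ^ 2)))
      (-(2 / Real.sqrt π) * Real.exp (-z ^ 2)) z := by
    have := ((hasDerivAt_const z (∫ s in Ioi (0:ℝ), Real.exp (-s ^ 2))).sub hFTC).const_mul
      (2 / Real.sqrt π)
    refine this.congr_deriv (Eq.symm ?_); ring
  refine this.congr_of_eventuallyEq ?_
  filter_upwards with w
  rw [erfc, G_eq w]

lemma erfc_nonneg (z : ℝ) : 0 ≤ erfc z := by
  refine mul_nonneg (by positivity) (setIntegral_nonneg measurableSet_Ioi fun s _ => ?_)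
  positivity

lemma tail_eq (z : ℝ) :
    (∫ s in Ioi z, s * Real.exp (-s ^ 2)) = Real.exp (-z ^ 2) / 2 := by
  have h : ∀ x ∈ Ici z, HasDerivAt (fun s : ℝ => -Real.exp (-s ^ 2) / 2)
      (x * Real.exp (-x ^ 2)) x := by
    intro x _
    have : HasDerivAt (fun s : ℝ => -s ^ 2) (-(2 * x)) x := by
      simpa [Pi.neg_def] using ((hasDerivAt_pow 2 x).neg)
    have := (this.exp).neg.div_const 2
    refine this.congr_deriv (Eq.symm ?_); ring
  have htend : Tendsto (fun s : ℝ => -Real.exp (-s ^ 2) / 2) atTop (nhds 0) := by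
    have h1 : Tendsto (fun s : ℝ => -s ^ 2) atTop atBot := by
      apply tendsto_neg_atBot_iff.mpr
      exact tendsto_pow_atTop (by norm_num)
    have := (Real.tendsto_exp_atBot.comp h1).neg.div_const 2
    simpa using this
  have := integral_Ioi_of_hasDerivAt_of_tendsto' h gauss_mul_integrable.integrableOn htend
  rw [this]; ring

lemma tail_lt {z : ℝ} (hz : 0 < z) :
    (∫ s in Ioi z, Real.exp (-s ^ 2)) < Real.exp (-z ^ 2) / (2 * z) := by
  have hD : 0 < ∫ s in Ioi z, (s / z - 1) * Real.exp (-s ^ 2) := by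
    have hint : IntegrableOn (fun s : ℝ => (s / z - 1) * Real.exp (-s ^ 2)) (Ioi z) := by
      have : (fun s : ℝ => (s / z - 1) * Real.exp (-s ^ 2)) =
          fun s => (1 / z) * (s * Real.exp (-s ^ 2)) - Real.exp (-s ^ 2) := by
        funext s; ring
      rw [this]
      exact ((gauss_mul_integrable.const_mul _).sub gauss_integrable).integrableOn
    have hae : 0 ≤ᵐ[volume.restrict (Ioi z)] fun s => (s / z - 1) * Real.exp (-s ^ 2) := by
      filter_upwards [ae_restrict_mem measurableSet_Ioi] with s hs
      have hs' : z < s := hs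
      have : 0 ≤ s / z - 1 := by
        rw [sub_nonneg, le_div_iff₀ hz]; simpa using hs'.le
      exact mul_nonneg this (Real.exp_pos _).le
    rw [setIntegral_pos_iff_support_of_nonneg_ae hae hint]
    have hpos : (0:ENNReal) < volume (Ioi z) := by simp
    refine hpos.trans_le (measure_mono fun s hs => ⟨?_, hs⟩)
    have hs' : z < s := hs
    have : 0 < s / z - 1 := by
      rw [sub_pos, lt_div_iff₀ hz]; simpa using hs'
    exact ne_of_gt (mul_pos this (Real.exp_pos _))
  have hsplit : (∫ s in Ioi z, (s / z - 1) * Real.exp (-s ^ 2)) =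
      (1 / z) * (∫ s in Ioi z, s * Real.exp (-s ^ 2)) - ∫ s in Ioi z, Real.exp (-s ^ 2) := by
    rw [← integral_const_mul, ← integral_sub ((gauss_mul_integrable.integrableOn).const_mul _)
      gauss_integrable.integrableOn]
    congr 1; funext s; ring
  rw [hsplit, tail_eq] at hD
  have : (1 / z) * (Real.exp (-z ^ 2) / 2) = Real.exp (-z ^ 2) / (2 * z) := by
    field_simp
  linarith [hD, this ▸ hD]

lemma erfc_lt {z : ℝ} (hz : 0 < z) : erfc z < Real.exp (-z ^ 2) / (Real.sqrt π * z) := by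
  have h := tail_lt hz
  have hπ : 0 < Real.sqrt π := Real.sqrt_pos.mpr Real.pi_pos
  rw [erfc]
  calc (2 / Real.sqrt π) * ∫ s in Ioi z, Real.exp (-s ^ 2)
      < (2 / Real.sqrt π) * (Real.exp (-z ^ 2) / (2 * z)) := by
        exact mul_lt_mul_of_pos_left h (by positivity)
    _ = Real.exp (-z ^ 2) / (Real.sqrt π * z) := by field_simp

lemma sq_div_sqrt_two (t : ℝ) : (t / Real.sqrt 2) ^ 2 = t ^ 2 / 2 := by
  rw [div_pow, Real.sq_sqrt (by norm_num : (2:ℝ) ≥ 0)]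

lemma sqrt_two_div_pi : Real.sqrt (2 / π) = Real.sqrt 2 / Real.sqrt π :=
  Real.sqrt_div (by norm_num) π

lemma sqrt_two_mul_self : Real.sqrt 2 * Real.sqrt 2 = 2 :=
  Real.mul_self_sqrt (by norm_num)

lemma rhs_eq {t : ℝ} (ht : 0 < t) :
    Real.exp (-t ^ 2 / 2) / (Real.sqrt π * (t / Real.sqrt 2)) =
      Real.sqrt (2 / π) * Real.exp (-t ^ 2 / 2) / t := by
  have h2 : (0:ℝ) < Real.sqrt 2 := Real.sqrt_pos.mpr (by norm_num)
  have hπ : (0:ℝ) < Real.sqrt π := Real.sqrt_pos.mpr Real.pi_pos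
  rw [sqrt_two_div_pi]
  field_simp

lemma hasDerivAt_theta (t : ℝ) :
    HasDerivAt theta
      (2 * t * erfc (t / Real.sqrt 2) - 2 * Real.sqrt (2 / π) * Real.exp (-t ^ 2 / 2)) t := by
  have h2 : (0:ℝ) < Real.sqrt 2 := Real.sqrt_pos.mpr (by norm_num)
  have hπ : (0:ℝ) < Real.sqrt π := Real.sqrt_pos.mpr Real.pi_pos
  have hE : HasDerivAt (fun t => erfc (t / Real.sqrt 2))
      (-Real.sqrt (2 / π) * Real.exp (-t ^ 2 / 2)) t := by
    have hc : HasDerivAt (fun t : ℝ => t / Real.sqrt 2) (1 / Real.sqrt 2) t := by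
      simpa using (hasDerivAt_id t).div_const (Real.sqrt 2)
    have := (hasDerivAt_erfc (t / Real.sqrt 2)).comp t hc
    refine this.congr_deriv (Eq.symm ?_)
    rw [sq_div_sqrt_two, sqrt_two_div_pi, ← neg_div]
    field_simp
    linear_combination (-1:ℝ) * sqrt_two_mul_self
  have hexp : HasDerivAt (fun t : ℝ => Real.exp (-t ^ 2 / 2))
      (Real.exp (-t ^ 2 / 2) * (-t)) t := by
    have h1 : HasDerivAt (fun t : ℝ => -t ^ 2 / 2) (-t) t := by
      have := ((hasDerivAt_pow 2 t).neg).div_const 2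
      refine this.congr_deriv (Eq.symm ?_); push_cast; ring
    exact h1.exp
  have h1 : HasDerivAt (fun t : ℝ => (t ^ 2 + 1)) (2 * t) t := by
    simpa using (hasDerivAt_pow 2 t).add_const 1
  have hprod := h1.mul hE
  have hsecond := ((hexp.mul (hasDerivAt_id t)).const_mul (Real.sqrt (2 / π)))
  have := hprod.sub hsecond
  have heq : theta = fun t => (t ^ 2 + 1) * erfc (t / Real.sqrt 2) -
      Real.sqrt (2 / π) * (Real.exp (-t ^ 2 / 2) * t) := by
    funext s; rw [theta]; ring
  rw [heq]
  refine this.congr_deriv (Eq.symm ?_)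
  simp only [id]
  ring

lemma continuous_theta : Continuous theta := by
  have : ∀ t : ℝ, HasDerivAt theta
      (2 * t * erfc (t / Real.sqrt 2) - 2 * Real.sqrt (2 / π) * Real.exp (-t ^ 2 / 2)) t :=
    hasDerivAt_theta
  exact continuous_iff_continuousAt.mpr fun t => (this t).continuousAt

lemma theta_deriv_neg {t : ℝ} (ht : 0 < t) :
    2 * t * erfc (t / Real.sqrt 2) - 2 * Real.sqrt (2 / π) * Real.exp (-t ^ 2 / 2) < 0 := by
  have h2 : (0:ℝ) < Real.sqrt 2 := Real.sqrt_pos.mpr (by norm_num)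
  have hπ : (0:ℝ) < Real.sqrt π := Real.sqrt_pos.mpr Real.pi_pos
  have hz : 0 < t / Real.sqrt 2 := div_pos ht h2
  have h := erfc_lt hz
  rw [sq_div_sqrt_two, ← neg_div] at h
  have key : erfc (t / Real.sqrt 2) < Real.sqrt (2 / π) * Real.exp (-t ^ 2 / 2) / t :=
    h.trans_le (le_of_eq (rhs_eq ht))
  have := mul_lt_mul_of_pos_left key (by positivity : (0:ℝ) < 2 * t)
  have heq : 2 * t * (Real.sqrt (2 / π) * Real.exp (-t ^ 2 / 2) / t) =
      2 * Real.sqrt (2 / π) * Real.exp (-t ^ 2 / 2) := by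
    field_simp
  linarith [heq ▸ this]

lemma theta_zero : theta 0 = 1 := by
  have hπ : (0:ℝ) < Real.sqrt π := Real.sqrt_pos.mpr Real.pi_pos
  have h : (∫ s in Ioi (0:ℝ), Real.exp (-s ^ 2)) = Real.sqrt π / 2 := by
    have := integral_gaussian_Ioi 1
    simpa using this
  rw [theta, erfc]
  simp only [zero_div, Real.sqrt_zero, mul_zero, sub_zero, ne_eq]
  rw [h]
  field_simp
  norm_num

lemma tendsto_mul_exp : Filter.Tendsto (fun t : ℝ => t * Real.exp (-t ^ 2 / 2))
    Filter.atTop (nhds 0) := by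
  have hbound : ∀ᶠ t in Filter.atTop, t * Real.exp (-t ^ 2 / 2) ≤ t * Real.exp (-t) := by
    filter_upwards [Filter.eventually_ge_atTop (2:ℝ)] with t ht
    refine mul_le_mul_of_nonneg_left (Real.exp_le_exp.mpr ?_) (by linarith)
    nlinarith
  have hbound0 : ∀ᶠ t in Filter.atTop, 0 ≤ t * Real.exp (-t ^ 2 / 2) := by
    filter_upwards [Filter.eventually_ge_atTop (0:ℝ)] with t ht
    positivity
  have h1 : Filter.Tendsto (fun t : ℝ => t * Real.exp (-t)) Filter.atTop (nhds 0) := by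
    have := tendsto_pow_mul_exp_neg_atTop_nhds_zero 1
    simpa using this
  exact tendsto_of_tendsto_of_tendsto_of_le_of_le' tendsto_const_nhds h1 hbound0 hbound

theorem stmt2' :
    StrictAntiOn theta (Set.Ici 0) ∧ theta 0 = 1 ∧
      Filter.Tendsto theta Filter.atTop (nhds 0) := by
  refine ⟨?_, theta_zero, ?_⟩
  · refine strictAntiOn_of_deriv_neg (convex_Ici 0) continuous_theta.continuousOn ?_
    intro t ht
    rw [interior_Ici] at ht
    rw [(hasDerivAt_theta t).deriv]
    exact theta_deriv_neg ht
  · have h2 : (0:ℝ) < Real.sqrt 2 := Real.sqrt_pos.mpr (by norm_num)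
    have hπ : (0:ℝ) < Real.sqrt π := Real.sqrt_pos.mpr Real.pi_pos
    have hterm2 : Filter.Tendsto (fun t : ℝ => Real.sqrt (2 / π) * Real.exp (-t ^ 2 / 2) * t)
        Filter.atTop (nhds 0) := by
      have := tendsto_mul_exp.const_mul (Real.sqrt (2 / π))
      simp only [mul_zero] at this
      refine this.congr fun t => ?_
      ring
    have hterm1 : Filter.Tendsto (fun t : ℝ => (t ^ 2 + 1) * erfc (t / Real.sqrt 2))
        Filter.atTop (nhds 0) := by
      have hub : ∀ᶠ t in Filter.atTop,
          (t ^ 2 + 1) * erfc (t / Real.sqrt 2) ≤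
            2 * Real.sqrt (2 / π) * (t * Real.exp (-t ^ 2 / 2)) := by
        filter_upwards [Filter.eventually_ge_atTop (1:ℝ)] with t ht
        have ht0 : 0 < t := by linarith
        have hz : 0 < t / Real.sqrt 2 := div_pos ht0 h2
        have h := erfc_lt hz
        rw [sq_div_sqrt_two, ← neg_div] at h
        have key : erfc (t / Real.sqrt 2) ≤ Real.sqrt (2 / π) * Real.exp (-t ^ 2 / 2) / t :=
          h.le.trans (le_of_eq (rhs_eq ht0))
        calc (t ^ 2 + 1) * erfc (t / Real.sqrt 2)
            ≤ (t ^ 2 + 1) * (Real.sqrt (2 / π) * Real.exp (-t ^ 2 / 2) / t) := by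
              exact mul_le_mul_of_nonneg_left key (by positivity)
          _ ≤ 2 * Real.sqrt (2 / π) * (t * Real.exp (-t ^ 2 / 2)) := by
              rw [div_eq_mul_inv]
              have h1 : t ^ 2 + 1 ≤ 2 * t ^ 2 := by nlinarith
              have : (t ^ 2 + 1) * (Real.sqrt (2 / π) * Real.exp (-t ^ 2 / 2) * t⁻¹) ≤
                  2 * t ^ 2 * (Real.sqrt (2 / π) * Real.exp (-t ^ 2 / 2) * t⁻¹) :=
                mul_le_mul_of_nonneg_right h1 (by positivity)
              refine this.trans (le_of_eq ?_)
              field_simp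
      have hlb : ∀ᶠ t in Filter.atTop, 0 ≤ (t ^ 2 + 1) * erfc (t / Real.sqrt 2) := by
        filter_upwards with t
        exact mul_nonneg (by positivity) (erfc_nonneg _)
      have hub' : Filter.Tendsto (fun t : ℝ => 2 * Real.sqrt (2 / π) * (t * Real.exp (-t ^ 2 / 2)))
          Filter.atTop (nhds 0) := by
        have := tendsto_mul_exp.const_mul (2 * Real.sqrt (2 / π))
        simpa using this
      exact tendsto_of_tendsto_of_tendsto_of_le_of_le' tendsto_const_nhds hub' hlb hub
    have := hterm1.sub hterm2
    simp only [sub_zero, sub_self] at this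
    refine this.congr fun t => ?_
    rw [theta]

end aux

/-- θ is strictly decreasing on [0,∞), θ(0) = 1, and θ(t) → 0 as t → ∞. -/
theorem stmt2 :
    StrictAntiOn theta (Set.Ici 0) ∧ theta 0 = 1 ∧
      Filter.Tendsto theta Filter.atTop (nhds 0) := stmt2'
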